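/- Let Ω ⊆ ℂ² be a nonempty open set, let (t_n)_{n∈ℤ} be nowhere-vanishing holomorphic functions on Ω satisfying the bilinear 2dTHE t_n·∂x∂y t_n − (∂x t_n)·(∂y t_n) = t_{n+1}·t_{n−1} for all n, and set s_{n+1} = (∂y t_n)/t_n − (∂y t_{n+1})/t_{n+1} and r_n = t_{n+1}t_{n−1}/t_n². Fix C ∈ ℂ, C ≠ 0, and let (u_n)_{n∈ℤ} be holomorphic functions on Ω such that for every n ∈ ℤ: ∂x∂y u_n + s_{n+1}·∂x u_n + r_n·u_n = 0, u_{n+1} = C·(∂y u_n + s_{n+1}·u_n), and u_{n−1} = −C⁻¹·r_n⁻¹·∂x u_n. Then the family τ_n := t_n·u_n satisfies the bilinear 2dTHE: τ_n·∂x∂yτ_n − (∂xτ_n)·(∂yτ_n) = τ_{n+1}·τ_{n−1} on Ω for every n ∈ ℤ. -/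

import Mathlib

/-- Partial derivative in the first (x) variable of a function on ℂ². -/
noncomputable def pdx (u : ℂ × ℂ → ℂ) : ℂ × ℂ → ℂ :=
  fun p => deriv (fun t => u (t, p.2)) p.1

/-- Partial derivative in the second (y) variable of a function on ℂ². -/
noncomputable def pdy (u : ℂ × ℂ → ℂ) : ℂ × ℂ → ℂ :=
  fun p => deriv (fun t => u (p.1, t)) p.2



lemma sliceX_diffAt {f : ℂ × ℂ → ℂ} {p : ℂ × ℂ} (hf : DifferentiableAt ℂ f p) :
    DifferentiableAt ℂ (fun x => f (x, p.2)) p.1 := by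
  have h : DifferentiableAt ℂ (fun x : ℂ => (x, p.2)) p.1 :=
    differentiableAt_id.prodMk (differentiableAt_const p.2)
  simpa [Function.comp_def] using (hf.comp p.1 (by simpa using h))

lemma sliceY_diffAt {f : ℂ × ℂ → ℂ} {p : ℂ × ℂ} (hf : DifferentiableAt ℂ f p) :
    DifferentiableAt ℂ (fun y => f (p.1, y)) p.2 := by
  have h : DifferentiableAt ℂ (fun y : ℂ => (p.1, y)) p.2 :=
    (differentiableAt_const p.1).prodMk differentiableAt_id
  simpa [Function.comp_def] using (hf.comp p.2 (by simpa using h))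

lemma pdx_mul {f g : ℂ × ℂ → ℂ} {p : ℂ × ℂ} (hf : DifferentiableAt ℂ f p)
    (hg : DifferentiableAt ℂ g p) :
    pdx (fun q => f q * g q) p = pdx f p * g p + f p * pdx g p := by
  show deriv (fun x => f (x, p.2) * g (x, p.2)) p.1 = _
  rw [deriv_fun_mul (sliceX_diffAt hf) (sliceX_diffAt hg)]
  simp [pdx]

lemma pdy_mul {f g : ℂ × ℂ → ℂ} {p : ℂ × ℂ} (hf : DifferentiableAt ℂ f p)
    (hg : DifferentiableAt ℂ g p) :
    pdy (fun q => f q * g q) p = pdy f p * g p + f p * pdy g p := by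
  show deriv (fun y => f (p.1, y) * g (p.1, y)) p.2 = _
  rw [deriv_fun_mul (sliceY_diffAt hf) (sliceY_diffAt hg)]
  simp [pdy]



open Set Metric Complex MeasureTheory intervalIntegral Filter
open scoped Real Topology

lemma pdy_slice_diffAt {Ω : Set (ℂ × ℂ)} (hΩ : IsOpen Ω) {f : ℂ × ℂ → ℂ}
    (hf : DifferentiableOn ℂ f Ω) {p : ℂ × ℂ} (hp : p ∈ Ω) :
    DifferentiableAt ℂ (fun x => pdy f (x, p.2)) p.1 := by
  obtain ⟨ε, hε, hball⟩ := Metric.isOpen_iff.mp hΩ p hp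
  set δ := ε / 4 with hδdef
  have hδ : 0 < δ := by positivity
  have hmem : ∀ x ∈ closedBall p.1 (3 * δ), ∀ w ∈ closedBall p.2 (3 * δ), (x, w) ∈ Ω := by
    intro x hx w hw
    apply hball
    rw [mem_ball, Prod.dist_eq]
    rw [mem_closedBall] at hx hw
    have h3 : 3 * δ < ε := by rw [hδdef]; linarith
    exact max_lt (lt_of_le_of_lt hx h3) (lt_of_le_of_lt hw h3)
  have hK : IsCompact (closedBall p.1 (3 * δ) ×ˢ closedBall p.2 (3 * δ)) :=
    (isCompact_closedBall _ _).prod (isCompact_closedBall _ _)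
  have hfc : ContinuousOn f (closedBall p.1 (3 * δ) ×ˢ closedBall p.2 (3 * δ)) :=
    hf.continuousOn.mono fun q hq => by
      have := hmem q.1 hq.1 q.2 hq.2; simpa using this
  obtain ⟨M, hM⟩ := hK.exists_bound_of_continuousOn hfc
  -- slices differentiable
  have hsx : ∀ w ∈ closedBall p.2 (3 * δ), DifferentiableOn ℂ (fun x => f (x, w)) (ball p.1 (3 * δ)) := by
    intro w hw x hx
    have hfa : DifferentiableAt ℂ f (x, w) :=
      hf.differentiableAt (hΩ.mem_nhds (hmem x (ball_subset_closedBall hx) w hw))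
    have h : DifferentiableAt ℂ (fun x : ℂ => (x, w)) x :=
      differentiableAt_id.prodMk (differentiableAt_const w)
    exact ((hfa.comp x (by simpa using h))).differentiableWithinAt
  have hsy : ∀ x ∈ closedBall p.1 (3 * δ), DifferentiableOn ℂ (fun w => f (x, w)) (ball p.2 (3 * δ)) := by
    intro x hx w hw
    have hfa : DifferentiableAt ℂ f (x, w) :=
      hf.differentiableAt (hΩ.mem_nhds (hmem x hx w (ball_subset_closedBall hw)))
    have h : DifferentiableAt ℂ (fun w : ℂ => (x, w)) w :=
      (differentiableAt_const x).prodMk differentiableAt_id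
    exact ((hfa.comp w (by simpa using h))).differentiableWithinAt
  -- bound on x-derivatives
  have hbd : ∀ x ∈ ball p.1 δ, ∀ w ∈ sphere p.2 δ, ‖deriv (fun x' => f (x', w)) x‖ ≤ M / δ := by
    intro x hx w hw
    have hw' : w ∈ closedBall p.2 (3 * δ) := by
      rw [mem_sphere] at hw
      rw [mem_closedBall, hw]; linarith
    have hsub : closedBall x δ ⊆ ball p.1 (3 * δ) := by
      intro z hz
      rw [mem_closedBall] at hz
      rw [mem_ball] at hx ⊢
      calc dist z p.1 ≤ dist z x + dist x p.1 := dist_triangle _ _ _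
        _ < δ + δ := by linarith
        _ ≤ 3 * δ := by linarith
    rw [← Complex.cderiv_eq_deriv isOpen_ball (hsx w hw') hδ hsub]
    apply Complex.norm_cderiv_le hδ
    intro z hz
    apply hM
    refine ⟨?_, hw'⟩
    rw [mem_sphere] at hz
    rw [mem_closedBall]
    rw [mem_ball] at hx
    calc dist z p.1 ≤ dist z x + dist x p.1 := dist_triangle _ _ _
      _ ≤ 3 * δ := by linarith

  -- circle parametrization facts
  have hc_sphere : ∀ θ : ℝ, circleMap p.2 δ θ ∈ sphere p.2 δ :=
    circleMap_mem_sphere p.2 hδ.le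
  have hc_cb : ∀ θ : ℝ, circleMap p.2 δ θ ∈ closedBall p.2 (3 * δ) := by
    intro θ
    have h := hc_sphere θ
    rw [mem_sphere] at h
    rw [mem_closedBall, h]; linarith
  set F : ℂ → ℝ → ℂ := fun x θ =>
    deriv (circleMap p.2 δ) θ •
      (((circleMap p.2 δ θ - p.2) ^ 2)⁻¹ • f (x, circleMap p.2 δ θ)) with hFdef
  set F' : ℂ → ℝ → ℂ := fun x θ =>
    deriv (circleMap p.2 δ) θ •
      (((circleMap p.2 δ θ - p.2) ^ 2)⁻¹ • deriv (fun x' => f (x', circleMap p.2 δ θ)) x)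
    with hF'def
  have hcont_aux : Continuous fun θ => deriv (circleMap p.2 δ) θ := by
    simp only [deriv_circleMap]
    exact (continuous_circleMap 0 δ).mul continuous_const
  have hcont_inv : Continuous fun θ => ((circleMap p.2 δ θ - p.2) ^ 2)⁻¹ := by
    apply Continuous.inv₀
    · exact ((continuous_circleMap p.2 δ).sub continuous_const).pow 2
    · intro θ
      exact pow_ne_zero 2 (sub_ne_zero.mpr (circleMap_ne_center hδ.ne'))
  have hcont_f : ∀ x ∈ closedBall p.1 (3 * δ), Continuous fun θ => f (x, circleMap p.2 δ θ) := by
    intro x hx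
    apply hfc.comp_continuous (continuous_const.prodMk (continuous_circleMap p.2 δ))
    exact fun θ => ⟨hx, hc_cb θ⟩
  have hFcont : ∀ x ∈ closedBall p.1 (3 * δ), Continuous (F x) := fun x hx =>
    hcont_aux.smul (hcont_inv.smul (hcont_f x hx))
  have hp13 : p.1 ∈ closedBall p.1 (3 * δ) := mem_closedBall_self (by positivity)
  -- measurability of F' p.1
  have hF'meas : AEStronglyMeasurable (F' p.1) (volume.restrict (Set.uIoc (0:ℝ) (2*π))) := by
    set k : ℕ → ℂ := fun j => ((δ / (j + 1) : ℝ) : ℂ) with hkdef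
    have hkpos : ∀ j : ℕ, (0:ℝ) < δ / (j + 1) := by
      intro j; positivity
    have hk0 : ∀ j, k j ≠ 0 := by
      intro j
      simp only [hkdef, ne_eq, Complex.ofReal_eq_zero]
      exact (hkpos j).ne'
    have hklim : Tendsto k atTop (𝓝 0) := by
      rw [hkdef]
      have : Tendsto (fun j : ℕ => δ / (j + 1)) atTop (𝓝 0) := by
        apply Tendsto.div_atTop tendsto_const_nhds
        exact tendsto_atTop_add_const_right _ _ tendsto_natCast_atTop_atTop
      have h2 := (Complex.continuous_ofReal.tendsto 0).comp this
      simpa [Function.comp_def] using h2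
    have hkball : ∀ j, p.1 + k j ∈ closedBall p.1 (3 * δ) := by
      intro j
      rw [mem_closedBall, dist_eq_norm, add_sub_cancel_left, hkdef]
      rw [Complex.norm_real, Real.norm_eq_abs, abs_of_pos (hkpos j)]
      rw [div_le_iff₀ (by positivity)]
      nlinarith [Nat.cast_nonneg (α := ℝ) j, hδ.le]
    set G : ℕ → ℝ → ℂ := fun j θ =>
      deriv (circleMap p.2 δ) θ •
        (((circleMap p.2 δ θ - p.2) ^ 2)⁻¹ •
          ((f (p.1 + k j, circleMap p.2 δ θ) - f (p.1, circleMap p.2 δ θ)) / k j)) with hGdef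
    apply aestronglyMeasurable_of_tendsto_ae atTop (f := G)
    · intro j
      apply Continuous.aestronglyMeasurable
      exact hcont_aux.smul (hcont_inv.smul
        (((hcont_f _ (hkball j)).sub (hcont_f _ hp13)).div_const _))
    · refine Eventually.of_forall fun θ => ?_
      have hdiffθ : DifferentiableAt ℂ (fun x' => f (x', circleMap p.2 δ θ)) p.1 :=
        (hsx _ (hc_cb θ)).differentiableAt (isOpen_ball.mem_nhds (mem_ball_self (by positivity)))
      have hslope := hdiffθ.hasDerivAt
      rw [hasDerivAt_iff_tendsto_slope] at hslope
      have hseq : Tendsto (fun j => p.1 + k j) atTop (𝓝[≠] p.1) := by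
        rw [tendsto_nhdsWithin_iff]
        constructor
        · simpa using tendsto_const_nhds.add hklim
        · exact Eventually.of_forall fun j => by simp [hk0 j]
      have hT := hslope.comp hseq
      have hGθ : ∀ j : ℕ, G j θ =
          deriv (circleMap p.2 δ) θ •
            (((circleMap p.2 δ θ - p.2) ^ 2)⁻¹ •
              slope (fun x' => f (x', circleMap p.2 δ θ)) p.1 (p.1 + k j)) := by
        intro j
        rw [slope_def_field]
        simp [hGdef]
      rw [show (fun j => G j θ) = fun j =>
          deriv (circleMap p.2 δ) θ •
            (((circleMap p.2 δ θ - p.2) ^ 2)⁻¹ •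
              slope (fun x' => f (x', circleMap p.2 δ θ)) p.1 (p.1 + k j)) from funext hGθ]
      exact (hT.const_smul _).const_smul _
  -- apply differentiation under the integral
  have key := intervalIntegral.hasDerivAt_integral_of_dominated_loc_of_deriv_le
    (F := F) (F' := F') (x₀ := p.1) (a := (0:ℝ)) (b := 2*π) (μ := volume)
    (bound := fun _ => δ * ((δ ^ 2)⁻¹ * (M / δ))) (ball_mem_nhds p.1 hδ)
    (by
      filter_upwards [closedBall_mem_nhds p.1 (show (0:ℝ) < 3*δ by positivity)] with x hx
      exact (hFcont x hx).aestronglyMeasurable)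
    ((hFcont p.1 hp13).intervalIntegrable 0 (2*π))
    hF'meas
    (by
      refine Eventually.of_forall fun θ hθ x hx => ?_
      have e1 : ‖deriv (circleMap p.2 δ) θ‖ = δ := by
        simp [deriv_circleMap, abs_of_pos hδ]
      have e2 : ‖((circleMap p.2 δ θ - p.2) ^ 2)⁻¹‖ = (δ ^ 2)⁻¹ := by
        rw [circleMap_sub_center]
        simp [abs_of_pos hδ]
      rw [hF'def]
      simp only [norm_smul, e1, e2]
      have := hbd x hx _ (hc_sphere θ)
      gcongr)
    (intervalIntegrable_const)
    (by
      refine Eventually.of_forall fun θ hθ x hx => ?_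
      have hx3 : x ∈ ball p.1 (3 * δ) := by
        rw [mem_ball] at hx ⊢; linarith
      have hdiffθ : DifferentiableAt ℂ (fun x' => f (x', circleMap p.2 δ θ)) x :=
        (hsx _ (hc_cb θ)).differentiableAt (isOpen_ball.mem_nhds hx3)
      exact (hdiffθ.hasDerivAt.fun_const_smul _).fun_const_smul _)
  have hgdiff : DifferentiableAt ℂ
      (fun x => (2 * ↑π * Complex.I)⁻¹ • ∫ θ in (0:ℝ)..2*π, F x θ) p.1 :=
    key.2.differentiableAt.fun_const_smul _
  apply hgdiff.congr_of_eventuallyEq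
  filter_upwards [ball_mem_nhds p.1 hδ] with x hx
  have hx3 : x ∈ closedBall p.1 (3 * δ) := by
    rw [mem_ball] at hx; rw [mem_closedBall]
    have := hx.le; linarith
  have hsub2 : closedBall p.2 δ ⊆ ball p.2 (3 * δ) := by
    intro z hz
    rw [mem_closedBall] at hz; rw [mem_ball]; linarith
  show pdy f (x, p.2) = _
  have h0 : pdy f (x, p.2) = deriv (fun w => f (x, w)) p.2 := rfl
  rw [h0, ← Complex.cderiv_eq_deriv isOpen_ball (hsy x hx3) hδ hsub2]
  simp only [Complex.cderiv, circleIntegral, hFdef]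


theorem backlund_transformation_produces_toda_hirota_solution
    (Ω : Set (ℂ × ℂ)) (hΩ : IsOpen Ω) (hne : Ω.Nonempty)
    (t : ℤ → ℂ × ℂ → ℂ)
    (htdiff : ∀ n : ℤ, DifferentiableOn ℂ (t n) Ω)
    (ht0 : ∀ n : ℤ, ∀ p ∈ Ω, t n p ≠ 0)
    (hTHE : ∀ n : ℤ, ∀ p ∈ Ω,
      t n p * pdx (pdy (t n)) p - pdx (t n) p * pdy (t n) p = t (n + 1) p * t (n - 1) p)
    (s r : ℤ → ℂ × ℂ → ℂ)
    (hs : ∀ n : ℤ, ∀ p, s (n + 1) p = pdy (t n) p / t n p - pdy (t (n + 1)) p / t (n + 1) p)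
    (hr : ∀ n : ℤ, ∀ p, r n p = t (n + 1) p * t (n - 1) p / (t n p) ^ 2)
    (C : ℂ) (hC : C ≠ 0)
    (u : ℤ → ℂ × ℂ → ℂ)
    (hudiff : ∀ n : ℤ, DifferentiableOn ℂ (u n) Ω)
    (hMu : ∀ n : ℤ, ∀ p ∈ Ω,
      pdx (pdy (u n)) p + s (n + 1) p * pdx (u n) p + r n p * u n p = 0)
    (hup : ∀ n : ℤ, ∀ p ∈ Ω, u (n + 1) p = C * (pdy (u n) p + s (n + 1) p * u n p))
    (hdown : ∀ n : ℤ, ∀ p ∈ Ω, u (n - 1) p = -C⁻¹ * (r n p)⁻¹ * pdx (u n) p)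
    (τ : ℤ → ℂ × ℂ → ℂ)
    (hτ : ∀ n : ℤ, ∀ p, τ n p = t n p * u n p) :
    ∀ n : ℤ, ∀ p ∈ Ω,
      τ n p * pdx (pdy (τ n)) p - pdx (τ n) p * pdy (τ n) p = τ (n + 1) p * τ (n - 1) p := by
  intro n p hp
  have hmemN : Ω ∈ 𝓝 p := hΩ.mem_nhds hp
  have dT : DifferentiableAt ℂ (t n) p := (htdiff n).differentiableAt hmemN
  have dU : DifferentiableAt ℂ (u n) p := (hudiff n).differentiableAt hmemN
  have hτf : τ n = fun q => t n q * u n q := funext (hτ n)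
  have hpdyτ : ∀ q ∈ Ω, pdy (τ n) q = pdy (t n) q * u n q + t n q * pdy (u n) q := by
    intro q hq
    rw [hτf]
    exact pdy_mul ((htdiff n).differentiableAt (hΩ.mem_nhds hq))
      ((hudiff n).differentiableAt (hΩ.mem_nhds hq))
  have hpdxτ : pdx (τ n) p = pdx (t n) p * u n p + t n p * pdx (u n) p := by
    rw [hτf]; exact pdx_mul dT dU
  have d1 : DifferentiableAt ℂ (fun x => pdy (t n) (x, p.2)) p.1 :=
    pdy_slice_diffAt hΩ (htdiff n) hp
  have d2 : DifferentiableAt ℂ (fun x => u n (x, p.2)) p.1 := sliceX_diffAt dU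
  have d3 : DifferentiableAt ℂ (fun x => t n (x, p.2)) p.1 := sliceX_diffAt dT
  have d4 : DifferentiableAt ℂ (fun x => pdy (u n) (x, p.2)) p.1 :=
    pdy_slice_diffAt hΩ (hudiff n) hp
  have hxx : pdx (pdy (τ n)) p =
      pdx (pdy (t n)) p * u n p + pdy (t n) p * pdx (u n) p
        + (pdx (t n) p * pdy (u n) p + t n p * pdx (pdy (u n)) p) := by
    have hev : (fun x => pdy (τ n) (x, p.2)) =ᶠ[𝓝 p.1]
        (fun x => pdy (t n) (x, p.2) * u n (x, p.2) + t n (x, p.2) * pdy (u n) (x, p.2)) := by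
      have hcont : ContinuousAt (fun x : ℂ => (x, p.2)) p.1 :=
        (continuous_id.prodMk continuous_const).continuousAt
      have hmem2 : Ω ∈ 𝓝 ((p.1 : ℂ), p.2) := by rw [Prod.mk.eta]; exact hmemN
      filter_upwards [hcont.preimage_mem_nhds hmem2] with x hx
      exact hpdyτ _ hx
    show deriv (fun x => pdy (τ n) (x, p.2)) p.1 = _
    rw [hev.deriv_eq]
    rw [deriv_fun_add (d1.fun_mul d2) (d3.fun_mul d4), deriv_fun_mul d1 d2, deriv_fun_mul d3 d4]
    simp only [pdx, Prod.mk.eta]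
  have hMu' := hMu n p hp
  rw [hr n p] at hMu'
  have hTHE' := hTHE n p hp
  have hT := ht0 n p hp
  have hTp := ht0 (n + 1) p hp
  have hTm := ht0 (n - 1) p hp
  rw [hτ n p, hτ (n + 1) p, hτ (n - 1) p, hxx, hpdxτ, hpdyτ p hp,
    hup n p hp, hdown n p hp, hr n p]
  field_simp at hMu'
  have hRHS : (t (n + 1) p * (C * (pdy (u n) p + s (n + 1) p * u n p))) *
      (t (n - 1) p * (-C⁻¹ * (t (n + 1) p * t (n - 1) p / (t n p) ^ 2)⁻¹ * pdx (u n) p))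
      = -((t n p) ^ 2) * pdx (u n) p * (pdy (u n) p + s (n + 1) p * u n p) := by
    rw [inv_div]
    field_simp
  rw [hRHS]
  linear_combination (u n p) ^ 2 * hTHE' + (u n p) * hMu'
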